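/- Let q ∈ (2,3) and β = 2^{q−1} − 1. Then h_β(y) = y^q + (1−y)^q + 2β y^{q/2}(1−y)^{q/2} ≤ 1 on [0,1], and h_β(y) = 1 exactly for y ∈ {0, 1/2, 1}. -/

import Mathlib

open Real

lemma two_rpow_split (q : ℝ) : (2:ℝ) ^ q = 2 * (2:ℝ) ^ (q-1) := by
  have h := Real.rpow_add (show (0:ℝ) < 2 by norm_num) 1 (q-1)
  rw [Real.rpow_one, show (1:ℝ)+(q-1)=q by ring] at h
  exact h

lemma two_rpow_split' (q : ℝ) : (2:ℝ) ^ (q-1) = 2 * (2:ℝ) ^ (q-2) := by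
  have h := Real.rpow_add (show (0:ℝ) < 2 by norm_num) 1 (q-2)
  rw [Real.rpow_one, show (1:ℝ)+(q-2)=q-1 by ring] at h
  exact h

lemma coef_ineq (q : ℝ) (hq1 : 2 ≤ q) (hq2 : q ≤ 3) :
    (2:ℝ) ^ (q-1) - 1 ≤ (q-1) * (2:ℝ) ^ (q-2) := by
  set u := q - 2 with hu
  have hu0 : 0 ≤ u := by simp only [hu]; linarith
  have h1 : (2:ℝ) ^ u ≤ Real.exp u := by
    calc (2:ℝ) ^ u ≤ (Real.exp 1) ^ u :=
          Real.rpow_le_rpow (by norm_num) (by linarith [Real.add_one_le_exp 1]) hu0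
      _ = Real.exp u := Real.exp_one_rpow u
  have h2 : (1 - u) * Real.exp u ≤ 1 := by
    have h := Real.add_one_le_exp (-u)
    have hpos : (0:ℝ) < Real.exp u := Real.exp_pos u
    have h3 : (1 - u) * Real.exp u ≤ Real.exp (-u) * Real.exp u := by nlinarith
    rwa [← Real.exp_add, neg_add_cancel, Real.exp_zero] at h3
  have h4 : (1 - u) * (2:ℝ) ^ u ≤ 1 := by
    rcases le_or_gt (1-u) 0 with h | h
    · nlinarith [Real.rpow_pos_of_pos (show (0:ℝ)<2 by norm_num) u]
    · nlinarith
  rw [two_rpow_split' q, show q - 2 = u from rfl]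
  nlinarith [Real.rpow_pos_of_pos (show (0:ℝ)<2 by norm_num) u]

lemma G2pos (q : ℝ) (hq1 : 2 < q) (hq2 : q < 3) {x : ℝ} (hx : 1 ≤ x) :
    0 < q*(q-1)*(x+1)^(q-2) - q*(q-1)*x^(q-2)
        - ((2:ℝ)^q - 2)*(q/2)*(q/2-1)*x^(q/2-2) := by
  have hx0 : (0:ℝ) < x := lt_of_lt_of_le one_pos hx
  have hx1 : (0:ℝ) < x + 1 := by linarith
  set A := (x+1)^(q-3) with hA
  set B := x^(q/2-2) with hB
  have hApos : 0 < A := Real.rpow_pos_of_pos hx1 _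
  have hBpos : 0 < B := Real.rpow_pos_of_pos hx0 _
  -- Step 1 (Bernoulli): (x+1)^(q-2) - x^(q-2) > (q-2) * A
  have step1 : (q-2) * A < (x+1)^(q-2) - x^(q-2) := by
    have hs : (-1:ℝ) ≤ x/(x+1) - 1 := by
      have : 0 ≤ x/(x+1) := by positivity
      linarith
    have hs' : x/(x+1) - 1 ≠ 0 := by
      have : x/(x+1) < 1 := (div_lt_one hx1).mpr (by linarith)
      intro h; linarith [sub_eq_zero.mp h]
    have hb := rpow_one_add_lt_one_add_mul_self hs hs'
        (show (0:ℝ) < q-2 by linarith) (show q-2 < 1 by linarith)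
    rw [show (1:ℝ) + (x/(x+1) - 1) = x/(x+1) by ring] at hb
    -- hb : (x/(x+1))^(q-2) < 1 + (q-2)*(x/(x+1)-1)
    have hdiv : (x/(x+1))^(q-2) = x^(q-2) / (x+1)^(q-2) :=
      Real.div_rpow hx0.le hx1.le _
    have hPpos : (0:ℝ) < (x+1)^(q-2) := Real.rpow_pos_of_pos hx1 _
    rw [hdiv] at hb
    have hb2 : x^(q-2) < (1 + (q-2)*(x/(x+1)-1)) * (x+1)^(q-2) := by
      rw [div_lt_iff₀ hPpos] at hb; linarith [hb]
    have hAe : (x+1)^(q-2) = A * (x+1) := by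
      rw [hA, ← Real.rpow_add_one (ne_of_gt hx1) (q-3),
        show q-3+1 = q-2 by ring]
    have hfrac : x/(x+1) - 1 = -(1/(x+1)) := by field_simp; ring
    rw [hfrac, hAe] at hb2
    have hexp : (1 + (q-2)*(-(1/(x+1)))) * (A*(x+1)) = A*(x+1) - (q-2)*A := by
      field_simp; ring
    rw [hexp] at hb2
    rw [hAe]; linarith
  -- Step 2 : 2^(q-3) * B ≤ A
  have step2 : (2:ℝ)^(q-3) * B ≤ A := by
    have h1 : A ≥ (2*x)^(q-3) := by
      rw [hA]
      exact Real.rpow_le_rpow_of_nonpos hx1 (by linarith) (by linarith)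
    have h2 : (2*x)^(q-3) = (2:ℝ)^(q-3) * x^(q-3) :=
      Real.mul_rpow (by norm_num) hx0.le
    have h3 : x^(q-3) = B * x^(q/2-1) := by
      rw [hB, ← Real.rpow_add hx0, show q/2-2+(q/2-1) = q-3 by ring]
    have h4 : (1:ℝ) ≤ x^(q/2-1) := Real.one_le_rpow hx (by linarith)
    have h5 : (0:ℝ) < (2:ℝ)^(q-3) := Real.rpow_pos_of_pos (by norm_num) _
    calc (2:ℝ)^(q-3) * B ≤ (2:ℝ)^(q-3) * (B * x^(q/2-1)) := by nlinarith [mul_le_mul_of_nonneg_left h4 hBpos.le, h5]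
      _ = (2*x)^(q-3) := by rw [h2, h3]
      _ ≤ A := h1
  -- coefficient inequality
  have hc : (2:ℝ)^(q-1) - 1 ≤ (q-1) * (2:ℝ)^(q-2) := coef_ineq q hq1.le hq2.le
  have hsplit : (2:ℝ)^q - 2 = 2 * ((2:ℝ)^(q-1) - 1) := by
    rw [two_rpow_split q]; ring
  have hsplit2 : (2:ℝ)^(q-2) = 2 * (2:ℝ)^(q-3) := by
    have h := Real.rpow_add (show (0:ℝ) < 2 by norm_num) 1 (q-3)
    rw [Real.rpow_one, show (1:ℝ)+(q-3)=q-2 by ring] at h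
    exact h
  -- combine: (q-1)*A ≥ ((2^(q-1)-1)/2)*B
  have e1 : ((2:ℝ)^(q-1)-1)/2 * B ≤ (q-1) * A := by
    have h6 : (q-1) * ((2:ℝ)^(q-3) * B) ≤ (q-1) * A :=
      mul_le_mul_of_nonneg_left step2 (by linarith)
    have h7 : ((2:ℝ)^(q-1)-1)/2 ≤ (q-1) * (2:ℝ)^(q-3) := by
      rw [hsplit2] at hc; linarith
    nlinarith
  rw [hsplit]
  nlinarith [mul_lt_mul_of_pos_left step1 (show (0:ℝ) < q*(q-1) by nlinarith),
    mul_le_mul_of_nonneg_left e1 (show (0:ℝ) ≤ q*(q-2) by nlinarith)]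

lemma keyG (q : ℝ) (hq1 : 2 < q) (hq2 : q < 3) {x : ℝ} (hx : 1 < x) :
    x^q + 1 + ((2:ℝ)^q - 2) * x^(q/2) < (x+1)^q := by
  set c := (2:ℝ)^q - 2 with hc
  set G : ℝ → ℝ := fun t => (t+1)^q - t^q - 1 - c * t^(q/2) with hGdef
  set G1 : ℝ → ℝ := fun t => q*(t+1)^(q-1) - q*t^(q-1) - c*(q/2)*t^(q/2-1) with hG1def
  have hshift : ∀ p : ℝ, ∀ t : ℝ, 0 < t →
      HasDerivAt (fun y : ℝ => (y+1)^p) (p*(t+1)^(p-1)) t := by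
    intro p t ht
    have h0 : (0:ℝ) < t + 1 := by linarith
    have h := (Real.hasDerivAt_rpow_const (x := t+1) (p := p)
        (Or.inl h0.ne')).comp t ((hasDerivAt_id t).add_const 1)
    rw [mul_one] at h; exact h
  have hd1 : ∀ t : ℝ, 0 < t → HasDerivAt G (G1 t) t := by
    intro t ht
    have h1 := hshift q t ht
    have h2 : HasDerivAt (fun y : ℝ => y^q) (q*t^(q-1)) t :=
      Real.hasDerivAt_rpow_const (Or.inl ht.ne')
    have h3 : HasDerivAt (fun y : ℝ => y^(q/2)) ((q/2)*t^(q/2-1)) t :=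
      Real.hasDerivAt_rpow_const (Or.inl ht.ne')
    have h := ((h1.sub h2).sub_const 1).sub (h3.const_mul c)
    refine h.congr_deriv ?_
    simp only [hG1def]; ring
  have hd2 : ∀ t : ℝ, 0 < t → HasDerivAt G1
      (q*(q-1)*(t+1)^(q-2) - q*(q-1)*t^(q-2) - c*(q/2)*(q/2-1)*t^(q/2-2)) t := by
    intro t ht
    have h1 := (hshift (q-1) t ht).const_mul q
    have h2 : HasDerivAt (fun y : ℝ => y^(q-1)) ((q-1)*t^(q-1-1)) t :=
      Real.hasDerivAt_rpow_const (Or.inl ht.ne')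
    have h3 : HasDerivAt (fun y : ℝ => y^(q/2-1)) ((q/2-1)*t^(q/2-1-1)) t :=
      Real.hasDerivAt_rpow_const (Or.inl ht.ne')
    have h := (h1.sub (h2.const_mul q)).sub (h3.const_mul (c*(q/2)))
    have e1 : q-1-1 = q-2 := by ring
    have e2 : q/2-1-1 = q/2-2 := by ring
    rw [e1, e2] at h
    refine h.congr_deriv ?_
    ring
  have hmono1 : StrictMonoOn G1 (Set.Ici (1:ℝ)) := by
    apply strictMonoOn_of_deriv_pos (convex_Ici 1)
    · intro t ht
      exact (hd2 t (lt_of_lt_of_le one_pos ht)).continuousAt.continuousWithinAt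
    · intro t ht
      rw [interior_Ici] at ht
      have ht0 : (0:ℝ) < t := lt_trans one_pos ht
      rw [(hd2 t ht0).deriv]
      exact G2pos q hq1 hq2 ht.le
  have hG1one : G1 1 = 0 := by
    have hcc : c = 2*(2:ℝ)^(q-1) - 2 := by rw [hc, two_rpow_split]
    simp only [hG1def, Real.one_rpow, hcc]
    norm_num
    ring
  have hG1pos : ∀ t : ℝ, 1 < t → 0 < G1 t := by
    intro t ht
    have := hmono1 (Set.self_mem_Ici) (Set.mem_Ici.mpr ht.le) ht
    rwa [hG1one] at this
  have hmono2 : StrictMonoOn G (Set.Ici (1:ℝ)) := by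
    apply strictMonoOn_of_deriv_pos (convex_Ici 1)
    · intro t ht
      exact (hd1 t (lt_of_lt_of_le one_pos ht)).continuousAt.continuousWithinAt
    · intro t ht
      rw [interior_Ici] at ht
      have ht0 : (0:ℝ) < t := lt_trans one_pos ht
      rw [(hd1 t ht0).deriv]
      exact hG1pos t ht
  have hGone : G 1 = 0 := by
    simp only [hGdef, Real.one_rpow, hc]
    rw [show (1:ℝ)+1 = 2 by norm_num]
    ring
  have hGx : 0 < G x := by
    have := hmono2 (Set.self_mem_Ici) (Set.mem_Ici.mpr hx.le) hx
    rwa [hGone] at this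
  simp only [hGdef] at hGx
  linarith

lemma half_lemma (q : ℝ) (hq1 : 2 < q) (hq2 : q < 3) {y : ℝ}
    (h1 : 1/2 < y) (h2 : y < 1) :
    y ^ q + (1 - y) ^ q
      + 2 * ((2:ℝ) ^ (q-1) - 1) * y ^ (q/2) * (1 - y) ^ (q/2) < 1 := by
  set m := 1 - y with hm
  have hm0 : 0 < m := by simp only [hm]; linarith
  have hmy : m < y := by simp only [hm]; linarith
  set x := y / m with hxdef
  have hx1 : 1 < x := (one_lt_div hm0).mpr hmy
  have hx0 : 0 < x := lt_trans one_pos hx1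
  have hyx : y = x * m := by rw [hxdef, div_mul_cancel₀ y hm0.ne']
  have hsum : m * (x + 1) = 1 := by
    rw [hxdef]; field_simp; simp only [hm]; ring
  have hyq : y ^ q = x ^ q * m ^ q := by
    rw [hyx, Real.mul_rpow hx0.le hm0.le]
  have hyh : y ^ (q/2) = x ^ (q/2) * m ^ (q/2) := by
    rw [hyx, Real.mul_rpow hx0.le hm0.le]
  have hmm : m ^ (q/2) * m ^ (q/2) = m ^ q := by
    rw [← Real.rpow_add hm0]; norm_num
  have hco : 2 * ((2:ℝ) ^ (q-1) - 1) = (2:ℝ)^q - 2 := by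
    linarith [two_rpow_split q]
  have hkey := keyG q hq1 hq2 hx1
  have hmq : (0:ℝ) < m ^ q := Real.rpow_pos_of_pos hm0 q
  have hfin : m ^ q * (x ^ q + 1 + ((2:ℝ)^q - 2) * x ^ (q/2)) < m ^ q * (x+1)^q :=
    (mul_lt_mul_iff_right₀ hmq).mpr hkey
  have hrhs : m ^ q * (x+1)^q = 1 := by
    rw [← Real.mul_rpow hm0.le (by linarith : (0:ℝ) ≤ x + 1), hsum, Real.one_rpow]
  calc y ^ q + (1 - y) ^ q + 2 * ((2:ℝ) ^ (q-1) - 1) * y ^ (q/2) * (1 - y) ^ (q/2)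
      = m ^ q * (x ^ q + 1 + ((2:ℝ)^q - 2) * x ^ (q/2)) := by
        rw [hco, hyq, hyh, ← hm]
        have h5 : x ^ (q/2) * m ^ (q/2) * m ^ (q/2) = x ^ (q/2) * m ^ q := by
          rw [mul_assoc, hmm]
        linear_combination ((2:ℝ)^q - 2) * h5
    _ < m ^ q * (x+1)^q := hfin
    _ = 1 := hrhs

lemma value_at_half (q : ℝ) (_hq1 : 2 < q) :
    (1/2:ℝ) ^ q + (1 - 1/2) ^ q
      + 2 * ((2:ℝ) ^ (q-1) - 1) * (1/2:ℝ) ^ (q/2) * (1 - 1/2) ^ (q/2) = 1 := by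
  have h1 : (1 - 1/2 : ℝ) = 1/2 := by norm_num
  have hmm : (1/2:ℝ) ^ (q/2) * (1/2:ℝ) ^ (q/2) = (1/2:ℝ) ^ q := by
    rw [← Real.rpow_add (by norm_num)]; norm_num
  have hinv : (1/2:ℝ) ^ q = ((2:ℝ)^q)⁻¹ := by
    rw [show (1/2:ℝ) = 2⁻¹ by norm_num, Real.inv_rpow (by norm_num)]
  have hco : 2 * ((2:ℝ) ^ (q-1) - 1) = (2:ℝ)^q - 2 := by
    linarith [two_rpow_split q]
  have h2q : (0:ℝ) < (2:ℝ)^q := Real.rpow_pos_of_pos (by norm_num) q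
  rw [h1, hco]
  have e : (1/2:ℝ)^q + (1/2:ℝ)^q + ((2:ℝ)^q - 2) * (1/2)^(q/2) * (1/2)^(q/2)
      = (2:ℝ)^q * (1/2)^q := by
    rw [mul_assoc, hmm]; ring
  rw [e, hinv]
  field_simp

lemma strict_lt (q : ℝ) (hq1 : 2 < q) (hq2 : q < 3) {y : ℝ}
    (hy0 : 0 < y) (hy1 : y < 1) (hyh : y ≠ 1/2) :
    y ^ q + (1 - y) ^ q
      + 2 * ((2:ℝ) ^ (q-1) - 1) * y ^ (q/2) * (1 - y) ^ (q/2) < 1 := by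
  rcases lt_or_gt_of_ne hyh with h | h
  · have hh := half_lemma q hq1 hq2 (show 1/2 < 1-y by linarith)
      (show 1-y < 1 by linarith)
    rw [show (1:ℝ)-(1-y) = y by ring] at hh
    have e : 2*((2:ℝ)^(q-1)-1)*(1-y)^(q/2)*y^(q/2)
        = 2*((2:ℝ)^(q-1)-1)*y^(q/2)*(1-y)^(q/2) := by ring
    rw [e] at hh
    linarith
  · exact half_lemma q hq1 hq2 h hy1

theorem stmt_11 (q : ℝ) (hq1 : 2 < q) (hq2 : q < 3) :
    ∀ y ∈ Set.Icc (0:ℝ) 1,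
      y ^ q + (1 - y) ^ q
          + 2 * ((2:ℝ) ^ (q-1) - 1) * y ^ (q/2) * (1 - y) ^ (q/2) ≤ 1 ∧
      (y ^ q + (1 - y) ^ q
          + 2 * ((2:ℝ) ^ (q-1) - 1) * y ^ (q/2) * (1 - y) ^ (q/2) = 1
        ↔ y = 0 ∨ y = 1/2 ∨ y = 1) := by
  rintro y ⟨hy0, hy1⟩
  by_cases h0 : y = 0
  · subst h0
    have e : (0:ℝ)^q + (1-0:ℝ)^q
        + 2*((2:ℝ)^(q-1)-1)*(0:ℝ)^(q/2)*(1-(0:ℝ))^(q/2) = 1 := by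
      rw [Real.zero_rpow (by linarith : q ≠ 0),
        Real.zero_rpow (by intro hc; rw [div_eq_zero_iff] at hc; rcases hc with hc|hc <;> linarith : q/2 ≠ 0),
        show (1:ℝ)-0 = 1 by norm_num, Real.one_rpow, Real.one_rpow]
      ring
    exact ⟨le_of_eq e, ⟨fun _ => Or.inl rfl, fun _ => e⟩⟩
  by_cases h1 : y = 1
  · subst h1
    have e : (1:ℝ)^q + (1-1:ℝ)^q
        + 2*((2:ℝ)^(q-1)-1)*(1:ℝ)^(q/2)*(1-(1:ℝ))^(q/2) = 1 := by
      rw [show (1:ℝ)-1 = 0 by norm_num,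
        Real.zero_rpow (by linarith : q ≠ 0),
        Real.zero_rpow (by intro hc; rw [div_eq_zero_iff] at hc; rcases hc with hc|hc <;> linarith : q/2 ≠ 0),
        Real.one_rpow, Real.one_rpow]
      ring
    exact ⟨le_of_eq e, ⟨fun _ => Or.inr (Or.inr rfl), fun _ => e⟩⟩
  by_cases hh : y = 1/2
  · subst hh
    have e := value_at_half q hq1
    exact ⟨le_of_eq e, ⟨fun _ => Or.inr (Or.inl rfl), fun _ => e⟩⟩
  · have hs := strict_lt q hq1 hq2 (lt_of_le_of_ne hy0 (Ne.symm h0))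
      (lt_of_le_of_ne hy1 h1) hh
    refine ⟨hs.le, ⟨fun he => absurd he (ne_of_lt hs), ?_⟩⟩
    rintro (rfl | rfl | rfl)
    · exact absurd rfl h0
    · exact absurd rfl hh
    · exact absurd rfl h1
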